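/- arXiv:1904.09808 — 4 statements merged into one kernel-verified Lean document; each statement's English description precedes it below -/
import Mathlib

section
/- Let \(\bar{\gamma} > 0\) and \(\kappa : (0,\bar{\gamma}] \to \mathbb{R}\) with \(\kappa(\gamma) < 0\) and \(\gamma\kappa(\gamma) > -1\) for all \(\gamma \in (0,\bar{\gamma}]\). Then for any \(\ell \in \mathbb{N}^*\) and \(\gamma \in (0,\bar{\gamma}]\), \(\gamma\sum_{k=1}^{\ell\lceil 1/\gamma\rceil}(1+\gamma\kappa(\gamma))^{-k} \geq -\kappa(\gamma)^{-1}[\exp(-\ell\kappa(\gamma)) - 1]\). -/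
open Real Set

/-- lower bound on the geometric sum when `κ(γ) < 0`. -/
theorem xi_lower_bound_neg (γbar : ℝ) (hγbar : 0 < γbar) (κ : ℝ → ℝ)
    (hκneg : ∀ γ ∈ Set.Ioc (0:ℝ) γbar, κ γ < 0)
    (hκ : ∀ γ ∈ Set.Ioc (0:ℝ) γbar, -1 < γ * κ γ)
    (ℓ : ℕ) (hℓ : 1 ≤ ℓ) (γ : ℝ) (hγ : γ ∈ Set.Ioc (0:ℝ) γbar) :
    γ * ∑ k ∈ Finset.Icc 1 (ℓ * ⌈1/γ⌉₊), (1 + γ * κ γ) ^ (-(k : ℤ))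
      ≥ -(κ γ)⁻¹ * (Real.exp (-(ℓ : ℝ) * κ γ) - 1) := by
  obtain ⟨hγ0, hγb⟩ := hγ
  have hκγ : κ γ < 0 := hκneg γ ⟨hγ0, hγb⟩
  have h1 : -1 < γ * κ γ := hκ γ ⟨hγ0, hγb⟩
  set a : ℝ := 1 + γ * κ γ with ha_def
  have ha0 : 0 < a := by simp only [ha_def]; linarith
  have ha1 : a < 1 := by
    have : γ * κ γ < 0 := mul_neg_of_pos_of_neg hγ0 hκγ
    simp only [ha_def]; linarith
  set n : ℕ := ℓ * ⌈1/γ⌉₊ with hn_def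
  set r : ℝ := a⁻¹ with hr_def
  have hr0 : 0 < r := inv_pos.mpr ha0
  have hr1 : 1 < r := by rw [hr_def]; exact (one_lt_inv₀ ha0).mpr ha1
  -- rewrite the sum
  have hsum : ∑ k ∈ Finset.Icc 1 n, a ^ (-(k : ℤ)) = ∑ k ∈ Finset.Icc 1 n, r ^ k := by
    refine Finset.sum_congr rfl fun k _ => ?_
    rw [hr_def, inv_pow, ← zpow_natCast a k, ← zpow_neg]
  have hgeom : ∑ k ∈ Finset.Icc 1 n, r ^ k = (r ^ (n + 1) - r) / (r - 1) := by
    rw [← Finset.Ico_add_one_right_eq_Icc, geom_sum_Ico (ne_of_gt hr1) (Nat.le_add_left 1 n), pow_one]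
  have hκne : κ γ ≠ 0 := ne_of_lt hκγ
  have hrm1 : r - 1 = -(γ * κ γ) * r := by
    have : a * r = 1 := mul_inv_cancel₀ (ne_of_gt ha0)
    nlinarith [this]
  have key : γ * ∑ k ∈ Finset.Icc 1 n, a ^ (-(k : ℤ)) = -(κ γ)⁻¹ * (r ^ n - 1) := by
    rw [hsum, hgeom, hrm1, pow_succ]
    field_simp
  rw [key]
  -- now suffices r^n ≥ exp(-ℓ κ)
  have hlog_a : Real.log a ≤ γ * κ γ := by
    have := Real.log_le_sub_one_of_pos ha0
    linarith
  have hlog_r : -(γ * κ γ) ≤ Real.log r := by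
    rw [hr_def, Real.log_inv]; linarith
  have hceil : 1/γ ≤ (⌈1/γ⌉₊ : ℝ) := Nat.le_ceil _
  have hnℝ : (ℓ : ℝ) / γ ≤ (n : ℝ) := by
    rw [hn_def]
    push_cast
    rw [div_le_iff₀ hγ0]  -- this may fail name; fallback
    calc (ℓ : ℝ) = (ℓ : ℝ) * 1 := by ring
      _ ≤ (ℓ : ℝ) * ((⌈1/γ⌉₊ : ℝ) * γ) := by
          have : (1:ℝ) ≤ (⌈1/γ⌉₊ : ℝ) * γ := by
            rw [div_le_iff₀ hγ0] at hceil; linarith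
          exact mul_le_mul_of_nonneg_left this (by positivity)
      _ = (ℓ : ℝ) * (⌈1/γ⌉₊ : ℝ) * γ := by ring
  have hℓκ : -(ℓ : ℝ) * κ γ ≤ (n : ℝ) * Real.log r := by
    have h2 : (n : ℝ) * (-(γ * κ γ)) ≤ (n : ℝ) * Real.log r :=
      mul_le_mul_of_nonneg_left hlog_r (Nat.cast_nonneg n)
    have h3 : -(ℓ : ℝ) * κ γ ≤ (n : ℝ) * (-(γ * κ γ)) := by
      have hne : -κ γ > 0 := by linarith
      have := mul_le_mul_of_nonneg_right hnℝ (le_of_lt (mul_pos hγ0 hne))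
      calc -(ℓ : ℝ) * κ γ = ((ℓ : ℝ) / γ) * (γ * -κ γ) := by field_simp
        _ ≤ (n : ℝ) * (γ * -κ γ) := this
        _ = (n : ℝ) * (-(γ * κ γ)) := by ring
    linarith
  have hrn : Real.exp (-(ℓ : ℝ) * κ γ) ≤ r ^ n := by
    have : r ^ n = Real.exp ((n : ℝ) * Real.log r) := by
      rw [← Real.log_pow, Real.exp_log (pow_pos hr0 n)]
    rw [this]
    exact Real.exp_le_exp.mpr hℓκ
  have hpos : 0 < -(κ γ)⁻¹ := by
    have : (κ γ)⁻¹ < 0 := inv_lt_zero.mpr hκγ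
    linarith
  have := mul_le_mul_of_nonneg_left (sub_le_sub_right hrn 1) (le_of_lt hpos)
  linarith
end

section
/- Let \(\bar{\gamma} > 0\) and \(\kappa : (0,\bar{\gamma}] \to \mathbb{R}\) with \(\kappa(\gamma) > 0\) for all \(\gamma \in (0,\bar{\gamma}]\). Then for any \(\ell \in \mathbb{N}^*\) and \(\gamma \in (0,\bar{\gamma}]\), \(\gamma\sum_{k=1}^{\ell\lceil 1/\gamma\rceil}(1+\gamma\kappa(\gamma))^{-k} \geq \kappa(\gamma)^{-1}[1 - \exp(-\ell\kappa(\gamma)/(1+\gamma\kappa(\gamma)))]\). -/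
open Real Set

/-- lower bound on the geometric sum when `κ(γ) > 0`. -/
theorem xi_lower_bound_pos (γbar : ℝ) (hγbar : 0 < γbar) (κ : ℝ → ℝ)
    (hκpos : ∀ γ ∈ Set.Ioc (0:ℝ) γbar, 0 < κ γ)
    (ℓ : ℕ) (hℓ : 1 ≤ ℓ) (γ : ℝ) (hγ : γ ∈ Set.Ioc (0:ℝ) γbar) :
    γ * ∑ k ∈ Finset.Icc 1 (ℓ * ⌈1/γ⌉₊), (1 + γ * κ γ) ^ (-(k : ℤ))
      ≥ (κ γ)⁻¹ * (1 - Real.exp (-(ℓ : ℝ) * κ γ / (1 + γ * κ γ))) := by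
  obtain ⟨hγ0, hγb⟩ := hγ
  have hc : 0 < κ γ := hκpos γ ⟨hγ0, hγb⟩
  set c := κ γ with hcdef
  have hr1 : (1:ℝ) < 1 + γ * c := by nlinarith
  have hr0 : (0:ℝ) < 1 + γ * c := by linarith
  set N := ℓ * ⌈1/γ⌉₊ with hN
  set x := (1 + γ * c)⁻¹ with hx
  have hx0 : 0 < x := inv_pos.mpr hr0
  have hx1 : x < 1 := by
    rw [hx, inv_lt_one_iff₀]; right; exact hr1
  have hxne : x ≠ 1 := ne_of_lt hx1
  have hterm : ∀ k : ℕ, (1 + γ * c) ^ (-(k : ℤ)) = x ^ k := by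
    intro k
    rw [hx, inv_pow, zpow_neg, zpow_natCast]
  have hsum : γ * ∑ k ∈ Finset.Icc 1 N, (1 + γ * c) ^ (-(k : ℤ))
      = c⁻¹ * (1 - x ^ N) := by
    have : ∑ k ∈ Finset.Icc 1 N, (1 + γ * c) ^ (-(k : ℤ))
        = ∑ k ∈ Finset.Ico 1 (N + 1), x ^ k := by
      rw [← Finset.Ico_add_one_right_eq_Icc]
      exact Finset.sum_congr rfl fun k _ => hterm k
    rw [this, geom_sum_Ico (by exact hxne) (Nat.le_add_left 1 N)]
    have hx1' : x - 1 ≠ 0 := sub_ne_zero.mpr hxne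
    have hcne : c ≠ 0 := ne_of_gt hc
    have hrne : (1 + γ * c) ≠ 0 := ne_of_gt hr0
    have hγne : γ ≠ 0 := ne_of_gt hγ0
    rw [pow_succ, pow_one]
    field_simp [hx]
    have hxc : x * (1 + γ * c) = 1 := by rw [hx]; exact inv_mul_cancel₀ hrne
    linear_combination (x ^ N - 1) * hxc
  have hNge : (ℓ : ℝ) / γ ≤ (N : ℝ) := by
    have h1 : (1:ℝ)/γ ≤ (⌈1/γ⌉₊ : ℝ) := Nat.le_ceil _
    have hl1 : (1:ℝ) ≤ (ℓ : ℝ) := by exact_mod_cast hℓ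
    have : (N : ℝ) = (ℓ : ℝ) * (⌈1/γ⌉₊ : ℝ) := by push_cast [hN]; ring
    rw [this, div_eq_mul_one_div]
    exact mul_le_mul_of_nonneg_left h1 (by linarith)
  have hlog : γ * c / (1 + γ * c) ≤ Real.log (1 + γ * c) := by
    have := Real.log_le_sub_one_of_pos hx0
    rw [hx, Real.log_inv] at this
    have h2 : 1 - (1 + γ * c)⁻¹ ≤ Real.log (1 + γ * c) := by linarith
    calc γ * c / (1 + γ * c) = 1 - (1 + γ * c)⁻¹ := by
          field_simp
          ring
        _ ≤ _ := h2
  have hmain : (ℓ : ℝ) * c / (1 + γ * c) ≤ (N : ℝ) * Real.log (1 + γ * c) := by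
    have hq : 0 ≤ γ * c / (1 + γ * c) := by positivity
    have hqN : 0 ≤ (ℓ : ℝ) / γ := by positivity
    calc (ℓ : ℝ) * c / (1 + γ * c) = ((ℓ : ℝ) / γ) * (γ * c / (1 + γ * c)) := by
          field_simp
      _ ≤ (N : ℝ) * Real.log (1 + γ * c) :=
          mul_le_mul hNge hlog hq (le_trans hqN hNge)
  have hexp : x ^ N ≤ Real.exp (-(ℓ : ℝ) * c / (1 + γ * c)) := by
    have hxNpos : 0 < x ^ N := pow_pos hx0 N
    rw [← Real.exp_log hxNpos, Real.exp_le_exp, Real.log_pow, hx, Real.log_inv]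
    push_cast
    rw [neg_mul, neg_div]
    linarith [hmain]
  rw [hsum]
  have : 1 - Real.exp (-(ℓ : ℝ) * c / (1 + γ * c)) ≤ 1 - x ^ N := by linarith
  exact mul_le_mul_of_nonneg_left this (le_of_lt (inv_pos.mpr hc))
end

section
/- For any real numbers \(a \geq b \geq 0\), any \(t \geq 0\) and any integer \(p \geq 1\): \((1+ta)^p - (1+tb)^p \leq t\{\max(1,t)^p(1+a)^p - b\}\). -/
/-- elementary inequality (74). -/
theorem pow_comparison_ineq (a b t : ℝ) (p : ℕ) (hba : b ≤ a) (hb : 0 ≤ b)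
    (ht : 0 ≤ t) (hp : 1 ≤ p) :
    (1 + t * a) ^ p - (1 + t * b) ^ p ≤ t * (max 1 t ^ p * (1 + a) ^ p - b) := by
  have ha : (0:ℝ) ≤ a := le_trans hb hba
  have htb : (1:ℝ) ≤ 1 + t * b := le_add_of_nonneg_right (mul_nonneg ht hb)
  have hp0 : p ≠ 0 := by omega
  have h2 : 1 + t * b ≤ (1 + t * b) ^ p := le_self_pow₀ htb hp0
  rcases le_total t 1 with h1 | h1
  · rw [max_eq_left h1, one_pow, one_mul]
    have hconv := (convexOn_pow p).2 (Set.mem_Ici.2 (zero_le_one : (0:ℝ) ≤ 1))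
      (Set.mem_Ici.2 (by linarith : (0:ℝ) ≤ 1 + a)) (by linarith : (0:ℝ) ≤ 1 - t) ht
      (by ring)
    simp only [smul_eq_mul, one_pow] at hconv
    have key : (1 + t * a) ^ p ≤ (1 - t) * 1 + t * (1 + a) ^ p := by
      have : (1 - t) * 1 + t * (1 + a) = 1 + t * a := by ring
      calc (1 + t * a) ^ p = ((1 - t) * 1 + t * (1 + a)) ^ p := by rw [this]
        _ ≤ (1 - t) * 1 + t * (1 + a) ^ p := hconv
    nlinarith
  · rw [max_eq_right h1]
    have key : (1 + t * a) ^ p ≤ t ^ p * (1 + a) ^ p := by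
      rw [← mul_pow]
      have hta : 0 ≤ t * a := mul_nonneg ht ha
      exact pow_le_pow_left₀ (by linarith) (by nlinarith) p
    have hpow1 : (1:ℝ) ≤ t ^ p * (1 + a) ^ p := by
      have h1' : (1:ℝ) ≤ t ^ p := one_le_pow₀ h1
      have h2' : (1:ℝ) ≤ (1 + a) ^ p := one_le_pow₀ (by linarith)
      nlinarith
    nlinarith
end

section
/- Let \(b : \mathbb{R}^d \to \mathbb{R}^d\) be L-Lipschitz with \(b(0)=0\), satisfying \(\langle b(x), x\rangle \leq -\mathfrak{m}_2^+\|x\|^2\) for \(\|x\| > R_2\) (with \(\mathfrak{m}_2^+ > 0\)) and \(\langle b(x)-b(y),x-y\rangle \leq -\mathfrak{m}\|x-y\|^2\) with \(\mathfrak{m} \leq 0\). Let \(\gamma \in (0, 2\mathfrak{m}_2^+/L^2)\), \(V(x) = 1+\|x\|^2\), and let Z be a d-dimensional standard Gaussian. Then \(\mathbb{E}[V(x+\gamma b(x)+\sqrt{\gamma}Z)] \leq (1-\gamma(2\mathfrak{m}_2^+-\gamma L^2))V(x) + \gamma(d + 2R_2^2(\mathfrak{m}_2^+-\mathfrak{m})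 + 2\mathfrak{m}_2^+)\) for all \(x \in \mathbb{R}^d\). -/
open Real MeasureTheory ProbabilityTheory
open scoped RealInnerProductSpace NNReal ENNReal

section aux

open Filter

/-- `exp (-x²/2) → 0` at `cocompact`. -/
private lemma tendsto_exp_half : Tendsto (fun x : ℝ => rexp (-(2⁻¹:ℝ) * x ^ 2))
    (Filter.cocompact ℝ) (nhds 0) := by
  have h := tendsto_rpow_abs_mul_exp_neg_mul_sq_cocompact (by norm_num : (0:ℝ) < 2⁻¹) 0
  simpa using h

private lemma tendsto_mul_exp_half : Tendsto (fun x : ℝ => x * rexp (-(2⁻¹:ℝ) * x ^ 2))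
    (Filter.cocompact ℝ) (nhds 0) := by
  have h := tendsto_rpow_abs_mul_exp_neg_mul_sq_cocompact (by norm_num : (0:ℝ) < 2⁻¹) 1
  simp only [Real.rpow_one] at h
  rw [tendsto_zero_iff_norm_tendsto_zero]
  refine h.congr fun x => ?_
  rw [norm_mul, Real.norm_eq_abs, Real.norm_eq_abs, abs_of_nonneg (exp_pos _).le]

private lemma integrable_sq_mul_exp_half :
    Integrable (fun x : ℝ => x ^ 2 * rexp (-(2⁻¹:ℝ) * x ^ 2)) := by
  have h := integrable_rpow_mul_exp_neg_mul_sq (by norm_num : (0:ℝ) < 2⁻¹)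
    (by norm_num : (-1:ℝ) < 2)
  simpa only [Real.rpow_two] using h

/-- First absolute-moment-type integral: `∫ x e^{-x²/2} = 0`. -/
private lemma integral_mul_exp_half : ∫ x : ℝ, x * rexp (-(2⁻¹:ℝ) * x ^ 2) = 0 := by
  have hderiv : ∀ x : ℝ, HasDerivAt (fun y : ℝ => -rexp (-(2⁻¹:ℝ) * y ^ 2))
      (x * rexp (-(2⁻¹:ℝ) * x ^ 2)) x := by
    intro x
    have := (((hasDerivAt_pow 2 x).const_mul (-(2⁻¹:ℝ))).exp).neg
    refine this.congr_deriv ?_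
    ring
  have hint : Integrable (fun x : ℝ => x * rexp (-(2⁻¹:ℝ) * x ^ 2)) :=
    integrable_mul_exp_neg_mul_sq (by norm_num)
  have hbot : Tendsto (fun y : ℝ => -rexp (-(2⁻¹:ℝ) * y ^ 2)) atBot (nhds (-0)) :=
    (tendsto_exp_half.mono_left (by rw [cocompact_eq_atBot_atTop]; exact le_sup_left)).neg
  have htop : Tendsto (fun y : ℝ => -rexp (-(2⁻¹:ℝ) * y ^ 2)) atTop (nhds (-0)) :=
    (tendsto_exp_half.mono_left (by rw [cocompact_eq_atBot_atTop]; exact le_sup_right)).neg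
  have := integral_of_hasDerivAt_of_tendsto hderiv hint hbot htop
  simpa using this

/-- Second moment integral: `∫ x² e^{-x²/2} = ∫ e^{-x²/2} = √(2π)`. -/
private lemma integral_sq_mul_exp_half :
    ∫ x : ℝ, x ^ 2 * rexp (-(2⁻¹:ℝ) * x ^ 2) = Real.sqrt (2 * π) := by
  have hexp : Integrable (fun x : ℝ => rexp (-(2⁻¹:ℝ) * x ^ 2)) :=
    integrable_exp_neg_mul_sq (by norm_num)
  have hderiv : ∀ x : ℝ, HasDerivAt (fun y : ℝ => -(y * rexp (-(2⁻¹:ℝ) * y ^ 2)))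
      (x ^ 2 * rexp (-(2⁻¹:ℝ) * x ^ 2) - rexp (-(2⁻¹:ℝ) * x ^ 2)) x := by
    intro x
    have h1 : HasDerivAt (fun y : ℝ => rexp (-(2⁻¹:ℝ) * y ^ 2))
        (rexp (-(2⁻¹:ℝ) * x ^ 2) * (-(2⁻¹:ℝ) * (2 * x ^ 1))) x :=
      ((hasDerivAt_pow 2 x).const_mul (-(2⁻¹:ℝ))).exp
    have h2 := ((hasDerivAt_id x).mul h1).neg
    refine h2.congr_deriv ?_
    simp only [pow_one, id_eq]
    ring
  have hint : Integrable
      (fun x : ℝ => x ^ 2 * rexp (-(2⁻¹:ℝ) * x ^ 2) - rexp (-(2⁻¹:ℝ) * x ^ 2)) :=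
    integrable_sq_mul_exp_half.sub hexp
  have hbot : Tendsto (fun y : ℝ => -(y * rexp (-(2⁻¹:ℝ) * y ^ 2))) atBot (nhds (-0)) :=
    (tendsto_mul_exp_half.mono_left (by rw [cocompact_eq_atBot_atTop]; exact le_sup_left)).neg
  have htop : Tendsto (fun y : ℝ => -(y * rexp (-(2⁻¹:ℝ) * y ^ 2))) atTop (nhds (-0)) :=
    (tendsto_mul_exp_half.mono_left (by rw [cocompact_eq_atBot_atTop]; exact le_sup_right)).neg
  have h0 := integral_of_hasDerivAt_of_tendsto hderiv hint hbot htop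
  rw [neg_zero, sub_zero] at h0
  rw [integral_sub integrable_sq_mul_exp_half hexp] at h0
  have hg : ∫ x : ℝ, rexp (-(2⁻¹:ℝ) * x ^ 2) = Real.sqrt (2 * π) := by
    rw [integral_gaussian]
    congr 1
    rw [div_eq_mul_inv, inv_inv, mul_comm]
  linarith [h0, hg]

/-- The standard gaussian pdf on ℝ. -/
private lemma gaussianPDFReal_zero_one (x : ℝ) :
    gaussianPDFReal 0 1 x = (Real.sqrt (2 * π))⁻¹ * rexp (-(2⁻¹:ℝ) * x ^ 2) := by
  rw [gaussianPDFReal]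
  simp only [NNReal.coe_one, mul_one, sub_zero]
  congr 1
  ring

private lemma sqrt_two_pi_pos : (0:ℝ) < Real.sqrt (2 * π) :=
  Real.sqrt_pos.mpr (by positivity)

/-- Transfer an integral against `gaussianReal 0 1` to a Lebesgue integral. -/
private lemma integral_gaussianReal_eq (g : ℝ → ℝ) :
    ∫ x, g x ∂(gaussianReal 0 1) = ∫ x, gaussianPDFReal 0 1 x * g x := by
  rw [gaussianReal_of_var_ne_zero _ one_ne_zero]
  have hd : gaussianPDF 0 1 = fun x => ((Real.toNNReal (gaussianPDFReal 0 1 x) : ℝ≥0) : ℝ≥0∞) :=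
    rfl
  rw [hd, integral_withDensity_eq_integral_smul
    ((measurable_gaussianPDFReal 0 1).real_toNNReal) g]
  refine integral_congr_ae (Filter.Eventually.of_forall fun x => ?_)
  simp only [NNReal.smul_def, smul_eq_mul, Real.coe_toNNReal _ (gaussianPDFReal_nonneg 0 1 x)]

private lemma integrable_gaussianReal_iff (g : ℝ → ℝ) :
    Integrable g (gaussianReal 0 1) ↔
      Integrable (fun x => gaussianPDFReal 0 1 x * g x) := by
  rw [gaussianReal_of_var_ne_zero _ one_ne_zero]
  have hd : gaussianPDF 0 1 = fun x => ((Real.toNNReal (gaussianPDFReal 0 1 x) : ℝ≥0) : ℝ≥0∞) :=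
    rfl
  rw [hd, integrable_withDensity_iff_integrable_smul
    ((measurable_gaussianPDFReal 0 1).real_toNNReal)]
  refine integrable_congr (Filter.Eventually.of_forall fun x => ?_)
  simp only [NNReal.smul_def, smul_eq_mul, Real.coe_toNNReal _ (gaussianPDFReal_nonneg 0 1 x)]

private lemma integrable_id_gaussian : Integrable (fun x : ℝ => x) (gaussianReal 0 1) := by
  rw [integrable_gaussianReal_iff]
  have h := (integrable_mul_exp_neg_mul_sq (by norm_num : (0:ℝ) < 2⁻¹)).const_mul
    ((Real.sqrt (2 * π))⁻¹)
  refine h.congr (Filter.Eventually.of_forall fun x => ?_)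
  simp only [gaussianPDFReal_zero_one]
  ring

private lemma integrable_sq_gaussian : Integrable (fun x : ℝ => x ^ 2) (gaussianReal 0 1) := by
  rw [integrable_gaussianReal_iff]
  have h := integrable_sq_mul_exp_half.const_mul ((Real.sqrt (2 * π))⁻¹)
  refine h.congr (Filter.Eventually.of_forall fun x => ?_)
  simp only [gaussianPDFReal_zero_one]
  ring

private lemma integral_id_gaussian : ∫ x, x ∂(gaussianReal 0 1) = 0 := by
  rw [integral_gaussianReal_eq]
  have : ∀ x : ℝ, gaussianPDFReal 0 1 x * x
      = (Real.sqrt (2 * π))⁻¹ * (x * rexp (-(2⁻¹:ℝ) * x ^ 2)) := by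
    intro x; rw [gaussianPDFReal_zero_one]; ring
  simp_rw [this]
  rw [integral_const_mul, integral_mul_exp_half, mul_zero]

private lemma integral_sq_gaussian : ∫ x, x ^ 2 ∂(gaussianReal 0 1) = 1 := by
  rw [integral_gaussianReal_eq]
  have : ∀ x : ℝ, gaussianPDFReal 0 1 x * x ^ 2
      = (Real.sqrt (2 * π))⁻¹ * (x ^ 2 * rexp (-(2⁻¹:ℝ) * x ^ 2)) := by
    intro x; rw [gaussianPDFReal_zero_one]; ring
  simp_rw [this]
  rw [integral_const_mul, integral_sq_mul_exp_half, inv_mul_cancel₀ sqrt_two_pi_pos.ne']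

private lemma integral_affine_sq (p q : ℝ) :
    ∫ y, (p + q * y) ^ 2 ∂(gaussianReal 0 1) = p ^ 2 + q ^ 2 := by
  have hfun : (fun y : ℝ => (p + q * y) ^ 2)
      = fun y => p ^ 2 + (2 * p * q) * y + q ^ 2 * y ^ 2 := by
    funext y; ring
  have h1 : Integrable (fun y : ℝ => (2 * p * q) * y) (gaussianReal 0 1) :=
    integrable_id_gaussian.const_mul _
  have h2 : Integrable (fun y : ℝ => q ^ 2 * y ^ 2) (gaussianReal 0 1) :=
    integrable_sq_gaussian.const_mul _
  have h0 : Integrable (fun y : ℝ => p ^ 2 + (2 * p * q) * y) (gaussianReal 0 1) :=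
    (integrable_const _).add h1
  rw [hfun, integral_add h0 h2, integral_add (integrable_const _) h1,
    integral_const, integral_const_mul, integral_const_mul,
    integral_id_gaussian, integral_sq_gaussian]
  simp [probReal_univ]

/-- The pushforward of the product gaussian under a coordinate evaluation. -/
private lemma map_eval_pi_gaussian (d : ℕ) (i : Fin d) :
    Measure.map (fun a : Fin d → ℝ => a i) (Measure.pi fun _ : Fin d => gaussianReal 0 1)
      = gaussianReal 0 1 := by
  refine Measure.ext fun s hs => ?_
  rw [Measure.map_apply (measurable_pi_apply i) hs]
  have hpre : (fun a : Fin d → ℝ => a i) ⁻¹' s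
      = Set.pi Set.univ (Function.update (fun _ : Fin d => (Set.univ : Set ℝ)) i s) := by
    ext a
    simp only [Set.mem_preimage, Set.mem_pi, Set.mem_univ, true_implies]
    constructor
    · intro h j
      rcases eq_or_ne j i with rfl | hj
      · simpa using h
      · simp [Function.update_apply, hj]
    · intro h
      have := h i
      simpa using this
  rw [hpre, Measure.pi_pi]
  rw [Finset.prod_eq_single i (fun j _ hj => by simp [Function.update_apply, hj])
    (fun h => absurd (Finset.mem_univ i) h)]
  simp

private lemma integral_eval_pi_gaussian (d : ℕ) (i : Fin d) (g : ℝ → ℝ)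
    (hg : AEStronglyMeasurable g (gaussianReal 0 1)) :
    ∫ a : Fin d → ℝ, g (a i) ∂(Measure.pi fun _ : Fin d => gaussianReal 0 1)
      = ∫ x, g x ∂(gaussianReal 0 1) := by
  conv_rhs => rw [← map_eval_pi_gaussian d i]
  rw [integral_map (measurable_pi_apply i).aemeasurable
      (by rwa [map_eval_pi_gaussian d i])]

private lemma integrable_eval_pi_gaussian (d : ℕ) (i : Fin d) (g : ℝ → ℝ)
    (hg : Integrable g (gaussianReal 0 1)) :
    Integrable (fun a : Fin d → ℝ => g (a i))
      (Measure.pi fun _ : Fin d => gaussianReal 0 1) := by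
  have h1 : AEStronglyMeasurable g
      (Measure.map (fun a : Fin d → ℝ => a i)
        (Measure.pi fun _ : Fin d => gaussianReal 0 1)) := by
    rw [map_eval_pi_gaussian d i]; exact hg.aestronglyMeasurable
  have := (integrable_map_measure h1 (measurable_pi_apply i).aemeasurable).mp
    (by rwa [map_eval_pi_gaussian d i])
  exact this

end aux

/-- The standard `d`-dimensional Gaussian measure on `EuclideanSpace ℝ (Fin d)`. -/
noncomputable def stdGaussian (d : ℕ) : Measure (EuclideanSpace ℝ (Fin d)) :=
  (Measure.pi fun _ : Fin d => gaussianReal 0 1).map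
    ⇑(EuclideanSpace.equiv (Fin d) ℝ).symm

/-- The Gaussian integral of the shifted squared norm. -/
private lemma stdGaussian_integral_shift (d : ℕ) (c : EuclideanSpace ℝ (Fin d)) (s : ℝ) :
    ∫ z, (1 + ‖c + s • z‖ ^ 2) ∂(stdGaussian d)
      = 1 + ‖c‖ ^ 2 + s ^ 2 * d := by
  have hmeas : AEMeasurable (⇑(EuclideanSpace.equiv (Fin d) ℝ).symm)
      (Measure.pi fun _ : Fin d => gaussianReal 0 1) :=
    ((EuclideanSpace.equiv (Fin d) ℝ).symm.continuous.measurable).aemeasurable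
  have hcont : Continuous fun z : EuclideanSpace ℝ (Fin d) => 1 + ‖c + s • z‖ ^ 2 :=
    continuous_const.add (((continuous_const.add (continuous_id.const_smul s)).norm).pow 2)
  rw [_root_.stdGaussian, integral_map hmeas hcont.aestronglyMeasurable]
  have hpt : ∀ a : Fin d → ℝ,
      (1 : ℝ) + ‖c + s • (EuclideanSpace.equiv (Fin d) ℝ).symm a‖ ^ 2
        = 1 + ∑ i, (c i + s * a i) ^ 2 := by
    intro a
    congr 1
    rw [EuclideanSpace.norm_eq, Real.sq_sqrt (by positivity)]
    refine Finset.sum_congr rfl fun i _ => ?_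
    rw [Real.norm_eq_abs, sq_abs]
    rfl
  simp_rw [hpt]
  have hginteg : ∀ i : Fin d, Integrable (fun y : ℝ => (c i + s * y) ^ 2)
      (gaussianReal 0 1) := by
    intro i
    have : (fun y : ℝ => (c i + s * y) ^ 2)
        = fun y => (c i) ^ 2 + (2 * c i * s) * y + s ^ 2 * y ^ 2 := by
      funext y; ring
    rw [this]
    exact ((integrable_const _).add (integrable_id_gaussian.const_mul _)).add
      (integrable_sq_gaussian.const_mul _)
  have hinteg : ∀ i : Fin d, Integrable (fun a : Fin d → ℝ => (c i + s * a i) ^ 2)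
      (Measure.pi fun _ : Fin d => gaussianReal 0 1) := fun i =>
    integrable_eval_pi_gaussian d i _ (hginteg i)
  rw [integral_add (integrable_const _) (integrable_finset_sum _ fun i _ => hinteg i),
    integral_const, integral_finset_sum _ fun i _ => hinteg i]
  have hterm : ∀ i : Fin d,
      ∫ a : Fin d → ℝ, (c i + s * a i) ^ 2 ∂(Measure.pi fun _ : Fin d => gaussianReal 0 1)
        = (c i) ^ 2 + s ^ 2 := by
    intro i
    rw [integral_eval_pi_gaussian d i _ (hginteg i).aestronglyMeasurable]
    exact integral_affine_sq (c i) s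
  rw [Finset.sum_congr rfl fun i _ => hterm i, Finset.sum_add_distrib,
    Finset.sum_const, Finset.card_univ, Fintype.card_fin]
  have hnorm : ‖c‖ ^ 2 = ∑ i, (c i) ^ 2 := by
    rw [EuclideanSpace.norm_eq, Real.sq_sqrt (by positivity)]
    exact Finset.sum_congr rfl fun i _ => by rw [Real.norm_eq_abs, sq_abs]
  simp only [probReal_univ, ENNReal.toReal_one, smul_eq_mul, one_mul, nsmul_eq_mul]
  rw [hnorm]
  ring


/-- Proposition 15 computation: Foster–Lyapunov drift inequality for
one Euler–Maruyama step with `V(x) = 1 + ‖x‖²`. -/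
theorem euler_step_drift (d : ℕ)
    (b : EuclideanSpace ℝ (Fin d) → EuclideanSpace ℝ (Fin d))
    (L m2 m R2 γ : ℝ)
    (hL : ∀ x y, ‖b x - b y‖ ≤ L * ‖x - y‖) (hb0 : b 0 = 0)
    (hm2 : 0 < m2)
    (hC2 : ∀ x : EuclideanSpace ℝ (Fin d), R2 < ‖x‖ → ⟪b x, x⟫ ≤ -m2 * ‖x‖ ^ 2)
    (hm : m ≤ 0)
    (hmono : ∀ x y, ⟪b x - b y, x - y⟫ ≤ -m * ‖x - y‖ ^ 2)
    (hγ : γ ∈ Set.Ioo (0:ℝ) (2 * m2 / L ^ 2)) :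
    ∀ x : EuclideanSpace ℝ (Fin d),
      (∫ z, (1 + ‖x + γ • b x + Real.sqrt γ • z‖ ^ 2) ∂(stdGaussian d))
        ≤ (1 - γ * (2 * m2 - γ * L ^ 2)) * (1 + ‖x‖ ^ 2)
            + γ * ((d : ℝ) + 2 * R2 ^ 2 * (m2 - m) + 2 * m2) := by
  intro x
  obtain ⟨hγ0, hγ2⟩ := hγ
  have hLne : L ≠ 0 := by
    rintro rfl
    rw [zero_pow (by norm_num), div_zero] at hγ2
    linarith
  have hL2 : 0 < L ^ 2 := (sq_nonneg L).lt_of_ne' (pow_ne_zero 2 hLne)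
  have hγL : γ * L ^ 2 < 2 * m2 := (lt_div_iff₀ hL2).mp hγ2
  have hBx : ‖b x‖ ≤ L * ‖x‖ := by simpa [hb0] using hL x 0
  have hB2 : ‖b x‖ ^ 2 ≤ L ^ 2 * ‖x‖ ^ 2 := by
    nlinarith [mul_self_le_mul_self (norm_nonneg (b x)) hBx]
  have hexp : ‖x + γ • b x‖ ^ 2
      = ‖x‖ ^ 2 + 2 * (γ * ⟪b x, x⟫) + γ ^ 2 * ‖b x‖ ^ 2 := by
    rw [norm_add_sq_real, real_inner_smul_right, real_inner_comm, norm_smul, mul_pow,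
      Real.norm_eq_abs, sq_abs]
  rw [stdGaussian_integral_shift d (x + γ • b x) (Real.sqrt γ), Real.sq_sqrt hγ0.le, hexp]
  have hmm : (0:ℝ) ≤ m2 - m := by linarith
  rcases le_or_gt ‖x‖ R2 with hcase | hcase
  · have hIn : ⟪b x, x⟫ ≤ -m * ‖x‖ ^ 2 := by simpa [hb0] using hmono x 0
    have hx2 : ‖x‖ ^ 2 ≤ R2 ^ 2 := by nlinarith [norm_nonneg x]
    nlinarith [mul_le_mul_of_nonneg_left hIn hγ0.le,
      mul_le_mul_of_nonneg_left hB2 (sq_nonneg γ),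
      mul_le_mul_of_nonneg_left hx2 (mul_nonneg hγ0.le hmm),
      mul_nonneg (mul_nonneg hγ0.le hγ0.le) (sq_nonneg L), sq_nonneg γ, hγ0.le]
  · have hIn : ⟪b x, x⟫ ≤ -m2 * ‖x‖ ^ 2 := hC2 x hcase
    nlinarith [mul_le_mul_of_nonneg_left hIn hγ0.le,
      mul_le_mul_of_nonneg_left hB2 (sq_nonneg γ),
      mul_nonneg (mul_nonneg hγ0.le (sq_nonneg R2)) hmm,
      mul_nonneg (mul_nonneg hγ0.le hγ0.le) (sq_nonneg L), hγ0.le]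
end
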